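/- arXiv:2402.17221 — 7 statements merged into one kernel-verified Lean document; each statement's English description precedes it below -/
import Mathlib

section
/- A point g in the open positive orthant (0,∞)^d is an interior generator (a minimum of the record-setting region S with respect to the coordinatewise order ≤, with all coordinates nonzero) if and only if (i) g ∈ S, and (ii) there exist d distinct indices i_1, …, i_d such that for every j ∈ [d], g_j = r^{(i_j)}_j = min{ r^{(i_ℓ)}_j : ℓ ∈ [d] }. -/
theorem stmt4 (d ρ : ℕ) (hd : 1 ≤ d) (r : Fin ρ → Fin d → ℝ)
    (hpos : ∀ i j, 0 < r i j)
    (hinc : ∀ i k, i ≠ k → ¬ ∀ j, r i j < r k j)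
    (hties : ∀ j, Function.Injective fun i => r i j)
    (S : Set (Fin d → ℝ))
    (hS : S = {x | (∀ j, 0 ≤ x j) ∧ ∀ i, ¬ ∀ j, x j < r i j})
    (g : Fin d → ℝ) (hg : ∀ j, 0 < g j) :
    (g ∈ S ∧ ∀ x ∈ S, (∀ j, x j ≤ g j) → x = g) ↔
      (g ∈ S ∧ ∃ ι : Fin d → Fin ρ, Function.Injective ι ∧
        ∀ j, g j = r (ι j) j ∧ ∀ ℓ, r (ι j) j ≤ r (ι ℓ) j) := by
  subst hS
  constructor
  · rintro ⟨hgS, hmin⟩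
    refine ⟨hgS, ?_⟩
    have key : ∀ j, ∃ i, g j = r i j ∧ ∀ j', j' ≠ j → g j' < r i j' := by
      intro j
      set F : Finset ℝ := insert (g j)
        ((Finset.univ.filter (fun i => r i j < g j)).image (fun i => g j - r i j)) with hF
      have hFne : F.Nonempty := ⟨g j, Finset.mem_insert_self _ _⟩
      set ε := F.min' hFne / 2 with hε
      have hmem : ∀ y ∈ F, 0 < y := by
        intro y hy
        rcases Finset.mem_insert.mp hy with h | h
        · exact h ▸ hg j
        · obtain ⟨i, hi, rfl⟩ := Finset.mem_image.mp h
          have := (Finset.mem_filter.mp hi).2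
          linarith
      have hmin0 : 0 < F.min' hFne := hmem _ (F.min'_mem hFne)
      have hε0 : 0 < ε := by rw [hε]; linarith
      have hεlt : ∀ y ∈ F, ε < y := by
        intro y hy
        have h1 := F.min'_le y hy
        rw [hε]; linarith
      set x : Fin d → ℝ := Function.update g j (g j - ε) with hx
      have hxj : x j = g j - ε := Function.update_self _ _ _
      have hxo : ∀ j', j' ≠ j → x j' = g j' := fun j' h => Function.update_of_ne h _ _
      have hxle : ∀ j', x j' ≤ g j' := by
        intro j'
        by_cases h : j' = j
        · subst h; rw [hxj]; linarith
        · rw [hxo j' h]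
      have hxne : x ≠ g := by
        intro h
        have := congrFun h j
        rw [hxj] at this
        linarith
      have hεgj : ε < g j := hεlt _ (Finset.mem_insert_self _ _)
      have hx0 : ∀ j', 0 ≤ x j' := by
        intro j'
        by_cases h : j' = j
        · subst h; rw [hxj]; linarith
        · rw [hxo j' h]; exact (hg j').le
      have hxS : x ∉ {x : Fin d → ℝ | (∀ j, 0 ≤ x j) ∧ ∀ i, ¬ ∀ j, x j < r i j} := by
        intro h
        exact hxne (hmin x h hxle)
      have hxS' : ∃ i, ∀ j', x j' < r i j' := by
        by_contra hc
        push_neg at hc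
        refine hxS ⟨hx0, fun i hall => ?_⟩
        obtain ⟨j', hj'⟩ := hc i
        exact absurd (hall j') (not_lt.mpr hj')
      obtain ⟨i, hi⟩ := hxS'
      refine ⟨i, ?_, ?_⟩
      · have h1 : g j - ε < r i j := by have := hi j; rwa [hxj] at this
        have h2 : g j ≤ r i j := by
          by_contra hc
          push_neg at hc
          have : g j - r i j ∈ F := by
            refine Finset.mem_insert_of_mem (Finset.mem_image.mpr ⟨i, ?_, rfl⟩)
            exact Finset.mem_filter.mpr ⟨Finset.mem_univ _, hc⟩
          have := hεlt _ this
          linarith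
        have h3 : ¬ ∀ j', g j' < r i j' := hgS.2 i
        push_neg at h3
        obtain ⟨j', hj'⟩ := h3
        by_cases h : j' = j
        · subst h; linarith [le_antisymm h2 hj']
        · exfalso
          have := hi j'
          rw [hxo j' h] at this
          exact absurd this (not_lt.mpr hj')
      · intro j' h
        have := hi j'
        rwa [hxo j' h] at this
    choose ι hι1 hι2 using key
    refine ⟨ι, ?_, ?_⟩
    · intro j ℓ h
      by_contra hne
      have h1 : g j < r (ι ℓ) j := hι2 ℓ j hne
      rw [← h, ← hι1 j] at h1
      exact lt_irrefl _ h1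
    · intro j
      refine ⟨hι1 j, ?_⟩
      intro ℓ
      by_cases h : ℓ = j
      · subst h; exact le_refl _
      · have := hι2 ℓ j (by exact fun he => h he.symm)
        rw [← hι1 j]
        exact le_of_lt this
  · rintro ⟨hgS, ι, hinj, hι⟩
    refine ⟨hgS, ?_⟩
    intro x hx hxle
    by_contra hne
    have hej : ∃ j, x j < g j := by
      by_contra h
      push_neg at h
      exact hne (funext fun j => le_antisymm (hxle j) (h j))
    obtain ⟨j, hj⟩ := hej
    apply hx.2 (ι j)
    intro j'
    by_cases h : j' = j
    · subst h
      calc x j' < g j' := hj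
        _ = r (ι j') j' := (hι j').1
    · have h1 : x j' ≤ g j' := hxle j'
      have h2 : g j' = r (ι j') j' := (hι j').1
      have h3 : r (ι j') j' ≤ r (ι j) j' := (hι j').2 j
      have h4 : r (ι j') j' ≠ r (ι j) j' := fun he => h (hinj (hties j' he))
      have := lt_of_le_of_ne h3 h4
      linarith
end

section
/- For every subset T ⊆ [d], the set of generators whose set of nonzero coordinates is exactly T equals the injection (via ι_T, filling other coordinates with 0) of the set of interior generators of the projected point set π_T(R) ⊂ ℝ^{|T|}. -/
/-- The record-setting region determined by points `r i : κ → ℝ` (with coordinate set `κ`). -/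
def RSreg {κ : Type*} {ρ : ℕ} (r : Fin ρ → κ → ℝ) : Set (κ → ℝ) :=
  {x | (∀ j, 0 ≤ x j) ∧ ∀ i, ¬ ∀ j, x j < r i j}

/-- `g` is a generator: a minimal element of the record-setting region under the
coordinatewise partial order. -/
def IsGen {κ : Type*} {ρ : ℕ} (r : Fin ρ → κ → ℝ) (g : κ → ℝ) : Prop :=
  g ∈ RSreg r ∧ ∀ x ∈ RSreg r, (∀ j, x j ≤ g j) → x = g

theorem stmt5 (d ρ : ℕ) (r : Fin ρ → Fin d → ℝ)
    (hpos : ∀ i j, 0 < r i j)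
    (hinc : ∀ i k, i ≠ k → ¬ ∀ j, r i j < r k j)
    (hties : ∀ j, Function.Injective fun i => r i j)
    (T : Finset (Fin d)) :
    {g : Fin d → ℝ | IsGen r g ∧ {j | g j ≠ 0} = ↑T} =
      (fun y : (T → ℝ) => fun j : Fin d => if h : j ∈ T then y ⟨j, h⟩ else 0) ''
        {y : (T → ℝ) | IsGen (fun i (j : T) => r i j.1) y ∧ ∀ j, y j ≠ 0} := by
  ext g
  simp only [Set.mem_setOf_eq, Set.mem_image]
  constructor
  · rintro ⟨⟨⟨hg0, hgr⟩, hmin⟩, hsupp⟩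
    have hT : ∀ j, g j ≠ 0 ↔ j ∈ T := by
      intro j
      have : j ∈ ({j | g j ≠ 0} : Set (Fin d)) ↔ j ∈ (↑T : Set (Fin d)) := by rw [hsupp]
      simpa using this
    refine ⟨fun j => g j.1, ⟨⟨⟨fun j => hg0 j.1, fun i hi => ?_⟩, ?_⟩,
      fun j => (hT j.1).mpr j.2⟩, ?_⟩
    · apply hgr i
      intro j
      by_cases h : j ∈ T
      · exact hi ⟨j, h⟩
      · have : g j = 0 := by by_contra h'; exact h ((hT j).mp h')
        rw [this]; exact hpos i j
    · intro z hz hzle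
      set z' : Fin d → ℝ := fun j => if h : j ∈ T then z ⟨j, h⟩ else 0 with hz'
      have hz'mem : z' ∈ RSreg r := by
        refine ⟨fun j => ?_, fun i hall => ?_⟩
        · by_cases h : j ∈ T
          · simpa [z', h] using hz.1 ⟨j, h⟩
          · simp [z', h]
        · apply hz.2 i
          intro j
          have := hall j.1
          simpa [z', j.2] using this
      have hz'le : ∀ j, z' j ≤ g j := by
        intro j
        by_cases h : j ∈ T
        · simpa [z', h] using hzle ⟨j, h⟩
        · have hg : g j = 0 := by by_contra h'; exact h ((hT j).mp h')
          simp [z', h, hg]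
      have heq := hmin z' hz'mem hz'le
      funext j
      have := congrFun heq j.1
      simpa [z', j.2] using this
    · funext j
      by_cases h : j ∈ T
      · simp [h]
      · have : g j = 0 := by by_contra h'; exact h ((hT j).mp h')
        simp [h, this]
  · rintro ⟨y, ⟨⟨⟨hy0, hyr⟩, hymin⟩, hyne⟩, rfl⟩
    constructor
    · constructor
      · refine ⟨fun j => ?_, fun i hall => ?_⟩
        · by_cases h : j ∈ T
          · simpa [h] using hy0 ⟨j, h⟩
          · simp [h]
        · apply hyr i
          intro j
          simpa [j.2] using hall j.1
      · intro x hx hxle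
        have hx0 : ∀ j, j ∉ T → x j = 0 := by
          intro j h
          have h1 := hx.1 j
          have h2 := hxle j
          simp [h] at h2
          linarith
        have hxmem : (fun j : T => x j.1) ∈ RSreg (fun i (j : T) => r i j.1) := by
          refine ⟨fun j => hx.1 j.1, fun i hall => ?_⟩
          apply hx.2 i
          intro j
          by_cases h : j ∈ T
          · exact hall ⟨j, h⟩
          · rw [hx0 j h]; exact hpos i j
        have hxley : ∀ j : T, x j.1 ≤ y j := by
          intro j
          have := hxle j.1
          simpa [j.2] using this
        have heq := hymin _ hxmem hxley
        funext j
        by_cases h : j ∈ T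
        · have := congrFun heq ⟨j, h⟩
          simpa [h] using this
        · simp [h, hx0 j h]
    · ext j
      simp only [Set.mem_setOf_eq, Finset.mem_coe]
      constructor
      · intro h
        by_contra h'
        simp [h'] at h
      · intro h
        simpa [h] using hyne ⟨j, h⟩
end

section
/- The record-setting region S determined by incomparable points r^{(1)}, …, r^{(ρ)} ∈ (0,∞)^d equals the union over all ordered partitions Π = (Π_1, …, Π_d) of [ρ] into d (possibly empty) cells of the closed upper orthants O^+(R_1^{(Π_1)}, …, R_d^{(Π_d)}), where R_j^{(P)} := max_{i ∈ P} r^{(i)}_j (with max over ∅ defined as 0). -/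
theorem stmt6 (d ρ : ℕ) (r : Fin ρ → Fin d → ℝ)
    (hpos : ∀ i j, 0 < r i j)
    (hinc : ∀ i k, i ≠ k → ¬ ∀ j, r i j < r k j) :
    {x : Fin d → ℝ | (∀ j, 0 ≤ x j) ∧ ∀ i, ¬ ∀ j, x j < r i j} =
      ⋃ k : Fin ρ → Fin d,
        {y : Fin d → ℝ | ∀ j, 0 ≤ y j ∧ (⨆ i : {i // k i = j}, r i.1 j) ≤ y j} := by
  ext x
  simp only [Set.mem_setOf_eq, Set.mem_iUnion]
  constructor
  · rintro ⟨hx0, hx⟩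
    have hch : ∀ i, ∃ j, r i j ≤ x j := by
      intro i
      by_contra h
      push_neg at h
      exact hx i fun j => h j
    choose k hk using hch
    refine ⟨k, fun j => ⟨hx0 j, Real.iSup_le ?_ (hx0 j)⟩⟩
    rintro ⟨i, hi⟩
    exact hi ▸ hk i
  · rintro ⟨k, hk⟩
    refine ⟨fun j => (hk j).1, fun i hlt => ?_⟩
    have h1 : r i (k i) ≤ ⨆ m : {m // k m = k i}, r m.1 (k i) :=
      le_ciSup (f := fun m : {m // k m = k i} => r m.1 (k i)) (Set.Finite.bddAbove (Set.finite_range _)) ⟨i, rfl⟩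
    exact absurd (h1.trans (hk (k i)).2) (not_le.mpr (hlt (k i)))
end

section
/- For n ≥ d ≥ 1, E ι_{d,n} = n^{\underline d} Σ_{j=0}^{d-1} (-1)^j C(d-1,j)/(n-d+j+1) · E ρ_{d, n-d+j+1}, relating the expected number of interior generators to expected numbers of remaining records, where n^{\underline d} = n(n-1)⋯(n-d+1). -/
open MeasureTheory Set

theorem stmt9 (d n : ℕ) (hd : 1 ≤ d) (hn : d ≤ n) :
    (n.descFactorial d : ℝ) *
        ∫ x in Set.univ.pi fun _ : Fin d => Set.Ioc (0 : ℝ) 1,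
          (∏ j, x j) ^ (d - 1) * (1 - ∏ j, x j) ^ (n - d) =
      (n.descFactorial d : ℝ) *
        ∑ j ∈ Finset.range d,
          (-1 : ℝ) ^ j * ((d - 1).choose j : ℝ) / ((n : ℝ) - d + j + 1) *
            (((n : ℝ) - d + j + 1) *
              ∫ x in Set.univ.pi fun _ : Fin d => Set.Ioc (0 : ℝ) 1,
                (1 - ∏ i, x i) ^ (n - d + j)) := by
  congr 1
  -- integrability of each power
  have hint : ∀ k : ℕ, IntegrableOn (fun x : Fin d → ℝ => (1 - ∏ i, x i) ^ k)
      (Set.univ.pi fun _ : Fin d => Set.Ioc (0 : ℝ) 1) := by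
    intro k
    have hc : Continuous fun x : Fin d → ℝ => (1 - ∏ i, x i) ^ k := by fun_prop
    have hcomp : IsCompact (Set.univ.pi fun _ : Fin d => Set.Icc (0 : ℝ) 1) :=
      isCompact_univ_pi fun _ => isCompact_Icc
    have h1 : IntegrableOn (fun x : Fin d → ℝ => (1 - ∏ i, x i) ^ k)
        (Set.univ.pi fun _ : Fin d => Set.Icc (0 : ℝ) 1) :=
      hc.continuousOn.integrableOn_compact hcomp
    exact h1.mono_set (Set.pi_mono fun i _ => Set.Ioc_subset_Icc_self)
  -- pointwise binomial identity
  have hfun : ∀ x : Fin d → ℝ,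
      (∏ j, x j) ^ (d - 1) * (1 - ∏ j, x j) ^ (n - d)
        = ∑ j ∈ Finset.range d,
            (-1 : ℝ) ^ j * ((d - 1).choose j : ℝ) * (1 - ∏ i, x i) ^ (n - d + j) := by
    intro x
    set t : ℝ := ∏ j, x j with ht
    have h1 : t = -(1 - t) + 1 := by ring
    have hb := add_pow (-(1 - t)) 1 (d - 1)
    rw [Nat.sub_add_cancel hd] at hb
    calc t ^ (d - 1) * (1 - t) ^ (n - d)
        = (-(1 - t) + 1) ^ (d - 1) * (1 - t) ^ (n - d) := by rw [← h1]
      _ = (∑ k ∈ Finset.range d, (-(1 - t)) ^ k * 1 ^ (d - 1 - k) * ((d - 1).choose k : ℝ))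
            * (1 - t) ^ (n - d) := by rw [hb]
      _ = ∑ j ∈ Finset.range d, (-1 : ℝ) ^ j * ((d - 1).choose j : ℝ) * (1 - t) ^ (n - d + j) := by
          rw [Finset.sum_mul]
          refine Finset.sum_congr rfl fun j _ => ?_
          rw [pow_add, neg_pow]
          ring
  simp only [hfun]
  rw [MeasureTheory.integral_finset_sum _ (fun j _ => ((hint (n - d + j)).const_mul _))]
  refine Finset.sum_congr rfl fun j hj => ?_
  rw [integral_const_mul]
  have hc : ((n : ℝ) - d + j + 1) ≠ 0 := by
    have : (d : ℝ) ≤ (n : ℝ) := by exact_mod_cast hn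
    have : (0 : ℝ) ≤ (j : ℝ) := by positivity
    nlinarith
  field_simp
end

section
/- For d ≥ 1 and n ≥ 1, the expected number of remaining records E ρ_{d,n} = n ∫_{(0,1]^d} (1 - x_1⋯x_d)^{n-1} dx equals the Roman harmonic number Σ_{j=1}^n (-1)^{j-1} C(n,j) j^{-(d-1)}. -/
open MeasureTheory Set

lemma cube_pow_integral (d k : ℕ) :
    ∫ x in Set.univ.pi fun _ : Fin d => Set.Ioc (0 : ℝ) 1, (∏ j, x j) ^ k
      = (1 / (k + 1 : ℝ)) ^ d := by
  have hmeas : MeasurableSet (Set.univ.pi fun _ : Fin d => Set.Ioc (0 : ℝ) 1) :=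
    MeasurableSet.univ_pi fun _ => measurableSet_Ioc
  rw [← integral_indicator hmeas]
  have hind : ∀ x : Fin d → ℝ,
      (Set.univ.pi fun _ : Fin d => Set.Ioc (0 : ℝ) 1).indicator
        (fun x : Fin d → ℝ => (∏ j, x j) ^ k) x
      = ∏ j, (Set.Ioc (0 : ℝ) 1).indicator (fun t => t ^ k) (x j) := by
    intro x
    by_cases hx : x ∈ Set.univ.pi fun _ : Fin d => Set.Ioc (0 : ℝ) 1
    · rw [Set.indicator_of_mem hx, ← Finset.prod_pow]
      exact Finset.prod_congr rfl fun j _ =>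
        (Set.indicator_of_mem (hx j (Set.mem_univ j)) _).symm
    · rw [Set.indicator_of_notMem hx]
      simp only [Set.mem_pi, Set.mem_univ, forall_true_left, not_forall] at hx
      obtain ⟨j, hj⟩ := hx
      exact (Finset.prod_eq_zero (Finset.mem_univ j)
        (Set.indicator_of_notMem hj _)).symm
  simp_rw [hind]
  rw [volume_pi, MeasureTheory.integral_fintype_prod_eq_pow
      (fun t : ℝ => (Set.Ioc (0 : ℝ) 1).indicator (fun t => t ^ k) t)]
  have h1 : ∫ t : ℝ, (Set.Ioc (0 : ℝ) 1).indicator (fun t => t ^ k) t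
      = (1 / (k + 1 : ℝ)) := by
    rw [integral_indicator measurableSet_Ioc,
      ← intervalIntegral.integral_of_le (by norm_num : (0:ℝ) ≤ 1),
      integral_pow]
    norm_num
  rw [h1, Fintype.card_fin]

theorem stmt10 (d n : ℕ) (hd : 1 ≤ d) (hn : 1 ≤ n) :
    (n : ℝ) *
        ∫ x in Set.univ.pi fun _ : Fin d => Set.Ioc (0 : ℝ) 1,
          (1 - ∏ j, x j) ^ (n - 1) =
      ∑ j ∈ Finset.Icc 1 n, (-1 : ℝ) ^ (j - 1) * (n.choose j : ℝ) / (j : ℝ) ^ (d - 1) := by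
  have hmeas : MeasurableSet (Set.univ.pi fun _ : Fin d => Set.Ioc (0 : ℝ) 1) :=
    MeasurableSet.univ_pi fun _ => measurableSet_Ioc
  have hSvol : volume (Set.univ.pi fun _ : Fin d => Set.Ioc (0 : ℝ) 1) = 1 := by
    rw [volume_pi_pi]
    simp [Real.volume_Ioc]
  haveI : IsFiniteMeasure
      (volume.restrict (Set.univ.pi fun _ : Fin d => Set.Ioc (0 : ℝ) 1)) := by
    constructor
    rw [Measure.restrict_apply_univ, hSvol]
    exact ENNReal.one_lt_top
  -- binomial expansion
  have hexp : ∀ x : Fin d → ℝ, (1 - ∏ j, x j) ^ (n - 1)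
      = ∑ k ∈ Finset.range n,
          (-1 : ℝ) ^ k * ((n-1).choose k : ℝ) * (∏ j, x j) ^ k := by
    intro x
    have h := add_pow (-(∏ j, x j)) (1 : ℝ) (n - 1)
    rw [show -(∏ j, x j) + 1 = 1 - ∏ j, x j by ring] at h
    rw [h, show n - 1 + 1 = n from Nat.succ_pred_eq_of_pos hn]
    refine Finset.sum_congr rfl fun k _ => ?_
    rw [neg_pow]
    ring
  simp_rw [hexp]
  -- integrability of each term
  have hint : ∀ k ∈ Finset.range n, Integrable
      (fun x : Fin d → ℝ => (-1 : ℝ) ^ k * ((n-1).choose k : ℝ) * (∏ j, x j) ^ k)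
      (volume.restrict (Set.univ.pi fun _ : Fin d => Set.Ioc (0 : ℝ) 1)) := by
    intro k _
    refine Integrable.mono' (integrable_const (((n-1).choose k : ℝ))) ?_ ?_
    · exact (continuous_const.mul ((continuous_finset_prod Finset.univ fun j _ =>
        continuous_apply j).pow k)).aestronglyMeasurable
    · filter_upwards [ae_restrict_mem hmeas] with x hx
      have hprod : |∏ j, x j| ≤ 1 := by
        rw [Finset.abs_prod]
        refine Finset.prod_le_one (fun j _ => abs_nonneg _) fun j _ => ?_
        have := hx j (Set.mem_univ j)
        rw [abs_of_pos this.1]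
        exact this.2
      rw [Real.norm_eq_abs, abs_mul, abs_mul, abs_pow, abs_pow, abs_neg, abs_one,
        one_pow, one_mul, Nat.abs_cast]
      calc ((n-1).choose k : ℝ) * |∏ j, x j| ^ k
          ≤ ((n-1).choose k : ℝ) * 1 := by
            refine mul_le_mul_of_nonneg_left ?_ (Nat.cast_nonneg _)
            exact pow_le_one₀ (abs_nonneg _) hprod
        _ = ((n-1).choose k : ℝ) := mul_one _
  rw [integral_finset_sum _ hint]
  simp_rw [integral_const_mul, cube_pow_integral d, Finset.mul_sum]
  -- reindex the right-hand side
  rw [show (Finset.Icc 1 n) = Finset.map ⟨fun k => k + 1, show Function.Injective (fun k : ℕ => k + 1) from fun a b h => by simpa using h⟩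
      (Finset.range n) from ?_]
  · rw [Finset.sum_map]
    refine Finset.sum_congr rfl fun k hk => ?_
    simp only [Function.Embedding.coeFn_mk, Nat.add_sub_cancel]
    have hchoose : (n : ℝ) * ((n-1).choose k : ℝ) = (n.choose (k+1) : ℝ) * (k+1) := by
      have h := Nat.add_one_mul_choose_eq (n-1) k
      have h2 : n - 1 + 1 = n := by omega
      simp only [Nat.succ_eq_add_one, h2] at h
      exact_mod_cast congrArg (Nat.cast : ℕ → ℝ) h
    obtain ⟨m, rfl⟩ : ∃ m, d = m + 1 := ⟨d - 1, by omega⟩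
    simp only [Nat.add_sub_cancel]
    rw [div_pow, one_pow, pow_succ]
    have hk1 : ((k : ℝ) + 1) ≠ 0 := by positivity
    have hk2 : ((k : ℝ) + 1) ^ m ≠ 0 := by positivity
    push_cast
    field_simp
    linear_combination hchoose
  · ext j
    simp only [Finset.mem_Icc, Finset.mem_map, Finset.mem_range,
      Function.Embedding.coeFn_mk]
    constructor
    · rintro ⟨h1, h2⟩
      exact ⟨j - 1, by omega, by show j - 1 + 1 = j; omega⟩
    · rintro ⟨k, hk, rfl⟩
      show 1 ≤ k + 1 ∧ k + 1 ≤ n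
      omega
end

section
/- For any d ≥ 1 and n ≥ 1, with ι̂_{d,n} := n^d ∫_{[0,1)^d} x_×^{d-1} e^{-n x_×} dx and ι̃_{d,n} := n^d ∫_{[0,1)^d} x_×^{d-1} (1 - x_×)^n dx, one has 0 ≤ ι̂_{d,n} - ι̃_{d,n} ≤ n^{d+1} ∫_{[0,1)^d} x_×^{d+1} e^{-n x_×} dx, and for fixed d this difference is O(n^{-1}(ln n)^{d-1}) as n → ∞. -/
open MeasureTheory Filter Asymptotics Set

namespace Stmt12Aux

noncomputable def cube (d : ℕ) : Set (Fin d → ℝ) := Set.univ.pi fun _ => Set.Ico (0:ℝ) 1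

lemma measurableSet_cube (d : ℕ) : MeasurableSet (cube d) :=
  MeasurableSet.univ_pi fun _ => measurableSet_Ico

lemma volume_cube (d : ℕ) : volume (cube d) = 1 := by
  rw [cube, volume_pi_pi]; simp

lemma prod_nonneg_of_mem {d : ℕ} {x : Fin d → ℝ} (hx : x ∈ cube d) : 0 ≤ ∏ j, x j :=
  Finset.prod_nonneg fun j _ => (hx j (Set.mem_univ j)).1

lemma prod_le_one_of_mem {d : ℕ} {x : Fin d → ℝ} (hx : x ∈ cube d) : ∏ j, x j ≤ 1 :=
  Finset.prod_le_one (fun j _ => (hx j (Set.mem_univ j)).1)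
    (fun j _ => le_of_lt (hx j (Set.mem_univ j)).2)

lemma integrableOn_cube {d : ℕ} {f : (Fin d → ℝ) → ℝ} (hf : Continuous f) :
    IntegrableOn f (cube d) := by
  have h1 : IntegrableOn f (Set.univ.pi fun _ : Fin d => Set.Icc (0:ℝ) 1) :=
    hf.continuousOn.integrableOn_compact (isCompact_univ_pi fun _ => isCompact_Icc)
  exact h1.mono_set (Set.pi_mono fun i _ => Set.Ico_subset_Icc_self)

lemma continuous_prodfn (d : ℕ) : Continuous (fun x : Fin d → ℝ => ∏ j, x j) :=
  continuous_finset_prod _ fun j _ => continuous_apply j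

noncomputable def E (d : ℕ) (m : ℝ) : ℝ := ∫ x in cube d, Real.exp (-m * ∏ j, x j)

lemma E_nonneg (d : ℕ) (m : ℝ) : 0 ≤ E d m :=
  setIntegral_nonneg (measurableSet_cube d) fun x _ => (Real.exp_pos _).le

lemma E_cont (d : ℕ) : Continuous (E d) := by
  rw [continuous_iff_continuousAt]
  intro m
  apply continuousAt_of_dominated (bound := fun _ : Fin d → ℝ => Real.exp (|m| + 1))
  · filter_upwards with n
    exact ((Real.continuous_exp.comp
      (continuous_const.mul (continuous_prodfn d)))).aestronglyMeasurable
  · have hev : ∀ᶠ n in nhds m, |n - m| < 1 := by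
      have := Metric.ball_mem_nhds m one_pos
      filter_upwards [this] with n hn using by
        simpa [Real.dist_eq] using hn
    filter_upwards [hev] with n hn
    refine ae_restrict_of_forall_mem (measurableSet_cube d) fun x hx => ?_
    rw [Real.norm_eq_abs, Real.abs_exp, Real.exp_le_exp]
    have h0 := prod_nonneg_of_mem hx
    have h1 := prod_le_one_of_mem hx
    have : -n * ∏ j, x j ≤ |n| * ∏ j, x j := by
      have : -n ≤ |n| := neg_le_abs n
      nlinarith
    have h2 : |n| ≤ |m| + 1 := by
      have := abs_sub_abs_le_abs_sub n m
      linarith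
    nlinarith [abs_nonneg n]
  · exact (integrableOn_const (by rw [volume_cube]; exact ENNReal.one_ne_top))
  · refine ae_restrict_of_forall_mem (measurableSet_cube d) fun x hx => ?_
    exact (Real.continuous_exp.comp ((continuous_neg.mul continuous_const))).continuousAt

lemma E_le_one (d : ℕ) {m : ℝ} (hm : 0 ≤ m) : E d m ≤ 1 := by
  have h : E d m ≤ ∫ _x in cube d, (1:ℝ) := by
    apply setIntegral_mono_on
    · exact integrableOn_cube (Real.continuous_exp.comp (continuous_const.mul (continuous_prodfn d)))
    · exact integrableOn_const (by rw [volume_cube]; exact ENNReal.one_ne_top)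
    · exact measurableSet_cube d
    · intro x hx
      rw [Real.exp_le_one_iff]
      have := prod_nonneg_of_mem hx
      nlinarith
  calc E d m ≤ ∫ _x in cube d, (1:ℝ) := h
    _ = 1 := by rw [setIntegral_const, measureReal_def, volume_cube]; simp

lemma E_zero (m : ℝ) : E 0 m = Real.exp (-m) := by
  have : cube 0 = Set.univ := by ext x; simp [cube]
  rw [E, this]
  simp only [Finset.univ_eq_empty, Finset.prod_empty, mul_one]
  rw [setIntegral_const]
  have : (volume : Measure (Fin 0 → ℝ)) Set.univ = 1 := by
    rw [volume_pi, Measure.pi_univ]; simp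
  rw [measureReal_def, this]
  simp

end Stmt12Aux

namespace Stmt12Aux

lemma E_succ (d : ℕ) {m : ℝ} (hm : 0 ≤ m) :
    E (d+1) m = ∫ t in Set.Ico (0:ℝ) 1, E d (m * t) := by
  set f : (Fin (d+1) → ℝ) → ℝ := fun x => Real.exp (-m * ∏ j, x j) with hf
  set G : ℝ × (Fin d → ℝ) → ℝ :=
    (Set.Ico (0:ℝ) 1 ×ˢ cube d).indicator
      (fun p => Real.exp (-m * (p.1 * ∏ j, p.2 j))) with hG
  have hmem : ∀ (t : ℝ) (y : Fin d → ℝ),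
      (Fin.cons t y ∈ cube (d+1)) ↔ (t, y) ∈ (Set.Ico (0:ℝ) 1 ×ˢ cube d) := by
    intro t y
    simp [cube, Set.mem_univ_pi, Fin.forall_fin_succ, Set.mem_prod]
  have h3 : ∀ p : ℝ × (Fin d → ℝ),
      (cube (d+1)).indicator f
        ((MeasurableEquiv.piFinSuccAbove (fun _ : Fin (d+1) => ℝ) 0).symm p) = G p := by
    rintro ⟨t, y⟩
    have he : (MeasurableEquiv.piFinSuccAbove (fun _ : Fin (d+1) => ℝ) 0).symm (t, y)
        = Fin.cons t y := by
      simp [MeasurableEquiv.piFinSuccAbove_symm_apply, Fin.insertNth_zero, Fin.consEquiv]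
    rw [he, hG]
    by_cases h : (t, y) ∈ Set.Ico (0:ℝ) 1 ×ˢ cube d
    · rw [Set.indicator_of_mem ((hmem t y).2 h), Set.indicator_of_mem h, hf]
      simp only [Fin.prod_cons]
    · rw [Set.indicator_of_notMem (fun hc => h ((hmem t y).1 hc)),
        Set.indicator_of_notMem h]
  have hGint : Integrable G (volume.prod volume) := by
    rw [hG, integrable_indicator_iff (measurableSet_Ico.prod (measurableSet_cube d))]
    apply Measure.integrableOn_of_bounded (M := 1)
    · rw [Measure.prod_prod, volume_cube]
      simp
    · exact ((Real.continuous_exp.comp (continuous_const.mul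
        (continuous_fst.mul ((continuous_prodfn d).comp continuous_snd)))).aestronglyMeasurable)
    · refine ae_restrict_of_forall_mem (measurableSet_Ico.prod (measurableSet_cube d))
        fun p hp => ?_
      rw [Real.norm_eq_abs, Real.abs_exp, Real.exp_le_one_iff]
      have h1 : (0:ℝ) ≤ p.1 := hp.1.1
      have h2 := prod_nonneg_of_mem hp.2
      nlinarith [mul_nonneg hm (mul_nonneg h1 h2)]
  have hinner : ∀ t, (∫ y, G (t, y)) =
      (Set.Ico (0:ℝ) 1).indicator (fun t => E d (m*t)) t := by
    intro t
    by_cases ht : t ∈ Set.Ico (0:ℝ) 1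
    · rw [Set.indicator_of_mem ht]
      have hgy : ∀ y, G (t,y) =
          (cube d).indicator (fun y => Real.exp (-(m*t) * ∏ j, y j)) y := by
        intro y
        rw [hG]
        by_cases hy : y ∈ cube d
        · rw [Set.indicator_of_mem (Set.mk_mem_prod ht hy), Set.indicator_of_mem hy]
          congr 1
          ring
        · rw [Set.indicator_of_notMem (fun hc => hy hc.2), Set.indicator_of_notMem hy]
      rw [show (fun y => G (t, y)) = _ from funext hgy,
        integral_indicator (measurableSet_cube d)]
      rfl
    · rw [Set.indicator_of_notMem ht]
      have : ∀ y, G (t,y) = 0 := fun y =>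
        Set.indicator_of_notMem (fun hc => ht hc.1) _
      simp [this]
  have mp := (volume_preserving_piFinSuccAbove (fun _ : Fin (d+1) => ℝ) 0).symm
  calc E (d+1) m = ∫ x, (cube (d+1)).indicator f x :=
        (integral_indicator (measurableSet_cube _)).symm
    _ = ∫ p : ℝ × (Fin d → ℝ), (cube (d+1)).indicator f
          ((MeasurableEquiv.piFinSuccAbove (fun _ : Fin (d+1) => ℝ) 0).symm p) :=
        (mp.integral_comp' _).symm
    _ = ∫ p : ℝ × (Fin d → ℝ), G p := by exact integral_congr_ae (Filter.Eventually.of_forall h3)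
    _ = ∫ t, ∫ y, G (t, y) := by
        rw [Measure.volume_eq_prod]
        exact integral_prod _ hGint
    _ = ∫ t, (Set.Ico (0:ℝ) 1).indicator (fun t => E d (m*t)) t := by
        exact integral_congr_ae (Filter.Eventually.of_forall hinner)
    _ = ∫ t in Set.Ico (0:ℝ) 1, E d (m * t) := integral_indicator measurableSet_Ico

end Stmt12Aux

namespace Stmt12Aux

lemma E_bound : ∀ d : ℕ, ∀ m : ℝ, 1 ≤ m →
    E (d+1) m ≤ 2^(d+1) * (1 + Real.log m)^d / m := by
  intro d
  induction d with
  | zero =>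
    intro m hm
    have hm0 : (0:ℝ) < m := lt_of_lt_of_le one_pos hm
    have h1 : E 1 m = ∫ t in (0:ℝ)..1, Real.exp (-(m * t)) := by
      rw [E_succ 0 hm0.le, setIntegral_congr_set MeasureTheory.Ico_ae_eq_Ioc,
        ← intervalIntegral.integral_of_le zero_le_one]
      congr 1
      ext t
      rw [E_zero]
    have hderiv : ∀ t ∈ Set.uIcc (0:ℝ) 1,
        HasDerivAt (fun t : ℝ => -(1/m) * Real.exp (-(m*t))) (Real.exp (-(m*t))) t := by
      intro t _
      have h2 : HasDerivAt (fun t : ℝ => -(m*t)) (-m) t := by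
        simpa using ((hasDerivAt_id t).const_mul m).fun_neg
      have h3 := (Real.hasDerivAt_exp (-(m*t))).comp t h2
      have h4 := h3.const_mul (-(1/m))
      refine h4.congr_deriv ?_
      field_simp
    have h5 : (∫ t in (0:ℝ)..1, Real.exp (-(m*t)))
        = -(1/m) * Real.exp (-(m*1)) - -(1/m) * Real.exp (-(m*0)) := by
      apply intervalIntegral.integral_eq_sub_of_hasDerivAt hderiv
      exact (Real.continuous_exp.comp (continuous_const.mul continuous_id).neg).intervalIntegrable 0 1
    have hval : E 1 m = 1/m - Real.exp (-m)/m := by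
      rw [h1, h5]
      simp only [mul_one, mul_zero, neg_zero, Real.exp_zero]
      ring
    rw [hval]
    have hE : 0 < Real.exp (-m)/m := by positivity
    have h12 : (1:ℝ)/m ≤ 2^(0+1) * (1 + Real.log m)^0/m := by
      rw [pow_zero, pow_one, mul_one]
      gcongr
      norm_num
    linarith
  | succ k ih =>
    intro m hm
    have hm0 : (0:ℝ) < m := lt_of_lt_of_le one_pos hm
    have hc : Continuous fun t : ℝ => E (k+1) (m*t) :=
      (E_cont (k+1)).comp (continuous_const.mul continuous_id)
    have hrec : E (k+2) m = ∫ t in (0:ℝ)..1, E (k+1) (m*t) := by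
      rw [E_succ (k+1) hm0.le, setIntegral_congr_set MeasureTheory.Ico_ae_eq_Ioc,
        ← intervalIntegral.integral_of_le zero_le_one]
    have hsplit : (∫ t in (0:ℝ)..(1/m), E (k+1) (m*t)) + (∫ t in (1/m)..1, E (k+1) (m*t))
        = ∫ t in (0:ℝ)..1, E (k+1) (m*t) :=
      intervalIntegral.integral_add_adjacent_intervals
        (hc.intervalIntegrable 0 (1/m)) (hc.intervalIntegrable (1/m) 1)
    have hinvm : 1/m ≤ 1 := by
      rw [div_le_one hm0]; exact hm
    have hinvm0 : (0:ℝ) ≤ 1/m := by positivity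
    -- part A
    have hA : (∫ t in (0:ℝ)..(1/m), E (k+1) (m*t)) ≤ 1/m := by
      have : (∫ t in (0:ℝ)..(1/m), E (k+1) (m*t)) ≤ ∫ _t in (0:ℝ)..(1/m), (1:ℝ) := by
        apply intervalIntegral.integral_mono_on hinvm0 (hc.intervalIntegrable _ _)
          (intervalIntegrable_const)
        intro t ht
        exact E_le_one (k+1) (mul_nonneg hm0.le ht.1)
      simpa using this
    -- part B
    have hmt1 : ∀ t ∈ Set.Icc (1/m) 1, 1 ≤ m * t := by
      intro t ht
      calc (1:ℝ) = m * (1/m) := by field_simp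
        _ ≤ m * t := by nlinarith [ht.1]
    have hmt0 : ∀ t ∈ Set.uIcc (1/m) 1, 0 < m * t := by
      intro t ht
      rw [Set.uIcc_of_le hinvm] at ht
      nlinarith [hmt1 t ht]
    have hcontg : ContinuousOn (fun t : ℝ => 2^(k+1) * (1 + Real.log (m*t))^k / (m*t))
        (Set.uIcc (1/m) 1) := by
      apply ContinuousOn.div
      · apply ContinuousOn.mul continuousOn_const
        apply ContinuousOn.pow
        apply ContinuousOn.add continuousOn_const
        apply Real.continuousOn_log.comp (continuous_const.mul continuous_id).continuousOn
        intro t ht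
        exact Set.mem_compl_singleton_iff.2 (ne_of_gt (hmt0 t ht))
      · exact (continuous_const.mul continuous_id).continuousOn
      · intro t ht; exact ne_of_gt (hmt0 t ht)
    have hB1 : (∫ t in (1/m)..1, E (k+1) (m*t))
        ≤ ∫ t in (1/m)..1, 2^(k+1) * (1 + Real.log (m*t))^k / (m*t) := by
      apply intervalIntegral.integral_mono_on hinvm (hc.intervalIntegrable _ _)
        (hcontg.intervalIntegrable)
      intro t ht
      exact ih (m*t) (hmt1 t ht)
    -- FTC for part B
    have hderiv : ∀ t ∈ Set.uIcc (1/m) 1,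
        HasDerivAt (fun t : ℝ => 2^(k+1) * (1 + Real.log (m*t))^(k+1) / ((k+1) * m))
          (2^(k+1) * (1 + Real.log (m*t))^k / (m*t)) t := by
      intro t ht
      have hmt := hmt0 t ht
      have h2 : HasDerivAt (fun t : ℝ => m*t) m t := by
        simpa using (hasDerivAt_id t).const_mul m
      have h3 := (Real.hasDerivAt_log (ne_of_gt hmt)).comp t h2
      have h4 : HasDerivAt (fun t : ℝ => 1 + Real.log (m*t)) ((m*t)⁻¹ * m) t :=
        (h3.const_add 1)
      have h5 := h4.pow (k+1)
      have h6 := (h5.const_mul ((2:ℝ)^(k+1))).div_const ((k+1) * m)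
      refine h6.congr_deriv ?_
      have hk1 : ((k:ℝ)+1) ≠ 0 := by positivity
      simp only [Nat.add_sub_cancel, Nat.cast_add, Nat.cast_one]
      field_simp
    have hB2 : (∫ t in (1/m)..1, 2^(k+1) * (1 + Real.log (m*t))^k / (m*t))
        = 2^(k+1) * (1 + Real.log m)^(k+1) / ((k+1) * m)
          - 2^(k+1) * 1 / ((k+1) * m) := by
      rw [intervalIntegral.integral_eq_sub_of_hasDerivAt hderiv hcontg.intervalIntegrable]
      have : m * (1/m) = 1 := by field_simp
      rw [mul_one, this, Real.log_one, add_zero, one_pow]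
    -- combine
    have hL : (1:ℝ) ≤ 1 + Real.log m := by
      have := Real.log_nonneg hm
      linarith
    have hP : (1:ℝ) ≤ (1 + Real.log m)^(k+1) := one_le_pow₀ hL
    have h2k : (1:ℝ) ≤ 2^(k+1) := one_le_pow₀ one_le_two
    have hfinal : 1/m + (2^(k+1) * (1 + Real.log m)^(k+1) / ((k+1) * m)
          - 2^(k+1) * 1 / ((k+1) * m)) ≤ 2^(k+1+1) * (1 + Real.log m)^(k+1) / m := by
      set P := (1 + Real.log m)^(k+1) with hPdef
      have heq : 1/m + (2^(k+1) * P / ((k+1) * m) - 2^(k+1) * 1 / ((k+1) * m))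
          = (1 + 2^(k+1) * ((P - 1)/(k+1))) / m := by
        have hk1 : ((k:ℝ)+1) ≠ 0 := by positivity
        field_simp
      rw [heq, div_le_div_iff₀ hm0 hm0]
      have hdiv : (P - 1)/((k:ℝ)+1) ≤ P - 1 := by
        apply div_le_self (by linarith) (by norm_num)
      have h7 : 1 + 2^(k+1) * ((P - 1)/((k:ℝ)+1)) ≤ 2^(k+1+1) * P := by
        have h8 := mul_le_mul_of_nonneg_left hdiv
          (le_of_lt (pow_pos (by norm_num : (0:ℝ) < 2) (k+1)))
        have h9 : (2:ℝ)^(k+1+1) = 2 * 2^(k+1) := by ring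
        nlinarith [h2k, hP]
      exact mul_le_mul_of_nonneg_right h7 hm0.le
    calc E (k+1+1) m = (∫ t in (0:ℝ)..(1/m), E (k+1) (m*t)) + ∫ t in (1/m)..1, E (k+1) (m*t) := by
          rw [hrec, ← hsplit]
      _ ≤ 1/m + (2^(k+1) * (1 + Real.log m)^(k+1) / ((k+1) * m)
            - 2^(k+1) * 1 / ((k+1) * m)) := by
          rw [← hB2]; exact add_le_add hA hB1
      _ ≤ 2^(k+1+1) * (1 + Real.log m)^(k+1) / m := hfinal

end Stmt12Aux

namespace Stmt12Aux

lemma ptw1 {t : ℝ} (ht0 : 0 ≤ t) (ht1 : t ≤ 1) (n : ℕ) :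
    (1 - t)^n ≤ Real.exp (-(n:ℝ) * t) := by
  have h1 : 1 - t ≤ Real.exp (-t) := by
    have := Real.add_one_le_exp (-t)
    linarith
  calc (1 - t)^n ≤ (Real.exp (-t))^n := pow_le_pow_left₀ (by linarith) h1 n
    _ = Real.exp (-(n:ℝ) * t) := by
        rw [← Real.exp_nat_mul]; ring_nf

lemma ptw2 {t : ℝ} (ht0 : 0 ≤ t) (ht1 : t ≤ 1) (n : ℕ) :
    Real.exp (-(n:ℝ) * t) * (1 - (n:ℝ) * t^2) ≤ (1 - t)^n := by
  have hE := Real.exp_pos (-t)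
  have ha : Real.exp (-t) * (1 - t^2) ≤ 1 - t := by
    have h1 : Real.exp (-t) * (1 + t) ≤ 1 := by
      have h2 : (1:ℝ) + t ≤ Real.exp t := by linarith [Real.add_one_le_exp t]
      have h3 := mul_le_mul_of_nonneg_left h2 hE.le
      rw [← Real.exp_add] at h3
      simpa using h3
    nlinarith
  have hnn : 0 ≤ Real.exp (-t) * (1 - t^2) := mul_nonneg hE.le (by nlinarith)
  have hstepA : (Real.exp (-t) * (1 - t^2))^n ≤ (1 - t)^n := pow_le_pow_left₀ hnn ha n
  have hstepB : (Real.exp (-t) * (1 - t^2))^n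
      = Real.exp (-(n:ℝ) * t) * ((1 - t^2))^n := by
    rw [mul_pow, ← Real.exp_nat_mul]; ring_nf
  have hstepC : 1 - (n:ℝ) * t^2 ≤ (1 - t^2)^n := by
    have := one_add_mul_le_pow (a := -t^2) (by nlinarith) n
    calc 1 - (n:ℝ) * t^2 = 1 + (n:ℝ) * (-t^2) := by ring
      _ ≤ (1 + -t^2)^n := this
      _ = (1 - t^2)^n := by ring_nf
  calc Real.exp (-(n:ℝ) * t) * (1 - (n:ℝ) * t^2)
      ≤ Real.exp (-(n:ℝ) * t) * (1 - t^2)^n :=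
        mul_le_mul_of_nonneg_left hstepC (Real.exp_pos _).le
    _ = (Real.exp (-t) * (1 - t^2))^n := hstepB.symm
    _ ≤ (1 - t)^n := hstepA

lemma ptw3 {s : ℝ} (hs : 0 ≤ s) (D : ℕ) :
    s^D * Real.exp (-s) ≤ (D.factorial : ℝ) * 2^D * Real.exp (-(s/2)) := by
  have h1 := Real.pow_div_factorial_le_exp (x := s/2) (by positivity) D
  have hfac : (0:ℝ) < (D.factorial : ℝ) := by positivity
  have h4 : (s/2)^D ≤ (D.factorial:ℝ) * Real.exp (s/2) := by
    rw [div_le_iff₀ hfac] at h1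
    linarith [h1]
  have h2 : s^D ≤ (D.factorial : ℝ) * 2^D * Real.exp (s/2) := by
    have h3 : s^D = (s/2)^D * 2^D := by
      rw [div_pow]
      field_simp
    rw [h3]
    calc (s/2)^D * 2^D ≤ ((D.factorial:ℝ) * Real.exp (s/2)) * 2^D :=
          mul_le_mul_of_nonneg_right h4 (by positivity)
      _ = (D.factorial : ℝ) * 2^D * Real.exp (s/2) := by ring
  calc s^D * Real.exp (-s) ≤ ((D.factorial : ℝ) * 2^D * Real.exp (s/2)) * Real.exp (-s) :=
        mul_le_mul_of_nonneg_right h2 (Real.exp_pos _).le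
    _ = (D.factorial : ℝ) * 2^D * Real.exp (-(s/2)) := by
        rw [mul_assoc, ← Real.exp_add]; ring_nf

end Stmt12Aux

/-- `ι̂_{d,n} = n^d ∫_{[0,1)^d} x_×^{d-1} e^{-n x_×} dx`. -/
noncomputable def iotaHat (d n : ℕ) : ℝ :=
  (n : ℝ) ^ d *
    ∫ x in Set.univ.pi fun _ : Fin d => Set.Ico (0 : ℝ) 1,
      (∏ j, x j) ^ (d - 1) * Real.exp (-(n : ℝ) * ∏ j, x j)

/-- `ι̃_{d,n} = n^d ∫_{[0,1)^d} x_×^{d-1} (1 - x_×)^n dx`. -/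
noncomputable def iotaTilde (d n : ℕ) : ℝ :=
  (n : ℝ) ^ d *
    ∫ x in Set.univ.pi fun _ : Fin d => Set.Ico (0 : ℝ) 1,
      (∏ j, x j) ^ (d - 1) * (1 - ∏ j, x j) ^ n

namespace Stmt12Aux

lemma main_ineq (k n : ℕ) (hn : 1 ≤ n) :
    0 ≤ iotaHat (k+1) n - iotaTilde (k+1) n ∧
    iotaHat (k+1) n - iotaTilde (k+1) n ≤
      (n : ℝ) ^ (k+1+1) *
        ∫ x in cube (k+1), (∏ j, x j) ^ (k+1+1) * Real.exp (-(n:ℝ) * ∏ j, x j) := by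
  have hcP := continuous_prodfn (k+1)
  have hIf : IntegrableOn
      (fun x : Fin (k+1) → ℝ => (∏ j, x j)^k * Real.exp (-(n:ℝ) * ∏ j, x j)) (cube (k+1)) :=
    integrableOn_cube ((hcP.pow k).mul (Real.continuous_exp.comp (continuous_const.mul hcP)))
  have hIg : IntegrableOn
      (fun x : Fin (k+1) → ℝ => (∏ j, x j)^k * (1 - ∏ j, x j)^n) (cube (k+1)) :=
    integrableOn_cube ((hcP.pow k).mul ((continuous_const.sub hcP).pow n))
  have hIh : IntegrableOn
      (fun x : Fin (k+1) → ℝ => (∏ j, x j)^(k+1+1) * Real.exp (-(n:ℝ) * ∏ j, x j))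
      (cube (k+1)) :=
    integrableOn_cube ((hcP.pow (k+1+1)).mul
      (Real.continuous_exp.comp (continuous_const.mul hcP)))
  have hmono1 : ∀ x ∈ cube (k+1),
      (∏ j, x j)^k * (1 - ∏ j, x j)^n ≤ (∏ j, x j)^k * Real.exp (-(n:ℝ) * ∏ j, x j) := by
    intro x hx
    exact mul_le_mul_of_nonneg_left
      (ptw1 (prod_nonneg_of_mem hx) (prod_le_one_of_mem hx) n)
      (pow_nonneg (prod_nonneg_of_mem hx) k)
  have hmono2 : ∀ x ∈ cube (k+1),
      (∏ j, x j)^k * Real.exp (-(n:ℝ) * ∏ j, x j)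
        ≤ (∏ j, x j)^k * (1 - ∏ j, x j)^n
          + (n:ℝ) * ((∏ j, x j)^(k+1+1) * Real.exp (-(n:ℝ) * ∏ j, x j)) := by
    intro x hx
    set t := ∏ j, x j with htd
    have ht0 := prod_nonneg_of_mem hx
    have ht1 := prod_le_one_of_mem hx
    have h := mul_le_mul_of_nonneg_left (ptw2 ht0 ht1 n) (pow_nonneg ht0 k)
    have hpow : t^(k+1+1) = t^k * t^2 := by ring
    rw [hpow]
    nlinarith [h]
  have hint1 : (∫ x in cube (k+1), (∏ j, x j)^k * (1 - ∏ j, x j)^n)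
      ≤ ∫ x in cube (k+1), (∏ j, x j)^k * Real.exp (-(n:ℝ) * ∏ j, x j) :=
    setIntegral_mono_on hIg hIf (measurableSet_cube _) hmono1
  have hint2 : (∫ x in cube (k+1), (∏ j, x j)^k * Real.exp (-(n:ℝ) * ∏ j, x j))
      ≤ (∫ x in cube (k+1), (∏ j, x j)^k * (1 - ∏ j, x j)^n)
        + (n:ℝ) * ∫ x in cube (k+1), (∏ j, x j)^(k+1+1) * Real.exp (-(n:ℝ) * ∏ j, x j) := by
    have hIsum : IntegrableOn
        (fun x : Fin (k+1) → ℝ => (∏ j, x j)^k * (1 - ∏ j, x j)^n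
          + (n:ℝ) * ((∏ j, x j)^(k+1+1) * Real.exp (-(n:ℝ) * ∏ j, x j)))
        (cube (k+1)) := hIg.add (hIh.const_mul (n:ℝ))
    have h := setIntegral_mono_on hIf hIsum (measurableSet_cube _) hmono2
    rwa [integral_add hIg (hIh.const_mul (n:ℝ)), integral_const_mul] at h
  have hHat : iotaHat (k+1) n
      = (n:ℝ)^(k+1) * ∫ x in cube (k+1), (∏ j, x j)^k * Real.exp (-(n:ℝ) * ∏ j, x j) := by
    simp only [iotaHat, Nat.add_sub_cancel]
    rfl
  have hTilde : iotaTilde (k+1) n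
      = (n:ℝ)^(k+1) * ∫ x in cube (k+1), (∏ j, x j)^k * (1 - ∏ j, x j)^n := by
    simp only [iotaTilde, Nat.add_sub_cancel]
    rfl
  have hnn : (0:ℝ) ≤ (n:ℝ)^(k+1) := by positivity
  constructor
  · rw [hHat, hTilde]
    have := mul_le_mul_of_nonneg_left hint1 hnn
    linarith
  · rw [hHat, hTilde]
    have hmul := mul_le_mul_of_nonneg_left hint2 hnn
    rw [mul_add] at hmul
    have hps : (n:ℝ)^(k+1) * ((n:ℝ) *
        ∫ x in cube (k+1), (∏ j, x j)^(k+1+1) * Real.exp (-(n:ℝ) * ∏ j, x j))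
        = (n:ℝ)^(k+1+1) *
          ∫ x in cube (k+1), (∏ j, x j)^(k+1+1) * Real.exp (-(n:ℝ) * ∏ j, x j) := by
      rw [pow_succ]
      ring
    linarith [hmul, hps]

lemma main_bigO (k : ℕ) :
    (fun n : ℕ => iotaHat (k+1) n - iotaTilde (k+1) n) =O[atTop]
      fun n : ℕ => (n:ℝ)⁻¹ * (Real.log n)^k := by
  rw [Asymptotics.isBigO_iff]
  refine ⟨(((k+1+1).factorial : ℝ) * 2^(k+1+1)) * 2^(k+1) * 2^k * 2, ?_⟩
  filter_upwards [Filter.eventually_ge_atTop 3] with n hn3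
  have hn1 : 1 ≤ n := by omega
  have hn3' : (3:ℝ) ≤ (n:ℝ) := by exact_mod_cast hn3
  have hn0 : (0:ℝ) < (n:ℝ) := by linarith
  obtain ⟨h0le, h1le⟩ := main_ineq k n hn1
  set K0 : ℝ := ((k+1+1).factorial : ℝ) * 2^(k+1+1) with hK0
  have hK0pos : 0 < K0 := by positivity
  have hcP := continuous_prodfn (k+1)
  have hIh : IntegrableOn
      (fun x : Fin (k+1) → ℝ => (∏ j, x j)^(k+1+1) * Real.exp (-(n:ℝ) * ∏ j, x j))
      (cube (k+1)) :=
    integrableOn_cube ((hcP.pow (k+1+1)).mul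
      (Real.continuous_exp.comp (continuous_const.mul hcP)))
  have hIe : IntegrableOn
      (fun x : Fin (k+1) → ℝ => Real.exp (-((n:ℝ)/2) * ∏ j, x j)) (cube (k+1)) :=
    integrableOn_cube (Real.continuous_exp.comp (continuous_const.mul hcP))
  have hbd : ∀ x ∈ cube (k+1),
      (n:ℝ)^(k+1+1) * ((∏ j, x j)^(k+1+1) * Real.exp (-(n:ℝ) * ∏ j, x j))
        ≤ K0 * Real.exp (-((n:ℝ)/2) * ∏ j, x j) := by
    intro x hx
    set t := ∏ j, x j with htd
    have ht0 := prod_nonneg_of_mem hx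
    have h := ptw3 (s := (n:ℝ)*t) (by positivity) (k+1+1)
    have e1 : ((n:ℝ)*t)^(k+1+1) = (n:ℝ)^(k+1+1) * t^(k+1+1) := mul_pow _ _ _
    have e2 : -((n:ℝ)*t) = -(n:ℝ)*t := by ring
    have e3 : -((n:ℝ)*t/2) = -((n:ℝ)/2)*t := by ring
    rw [e1, e2, e3] at h
    rw [hK0]
    nlinarith [h]
  have hstep : (n:ℝ)^(k+1+1) *
      (∫ x in cube (k+1), (∏ j, x j)^(k+1+1) * Real.exp (-(n:ℝ) * ∏ j, x j))
      ≤ K0 * E (k+1) ((n:ℝ)/2) := by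
    have h := setIntegral_mono_on (hIh.const_mul ((n:ℝ)^(k+1+1)))
      (hIe.const_mul K0) (measurableSet_cube _) hbd
    rwa [integral_const_mul, integral_const_mul] at h
  have hhalf1 : (1:ℝ) ≤ (n:ℝ)/2 := by linarith
  have hEbd := E_bound k ((n:ℝ)/2) hhalf1
  have hlog1 : 1 ≤ Real.log n := by
    rw [Real.le_log_iff_exp_le hn0]
    calc Real.exp 1 ≤ 2.7182818286 := (Real.exp_one_lt_d9).le
      _ ≤ (n:ℝ) := by linarith
  have hloghalf : Real.log ((n:ℝ)/2) ≤ Real.log n :=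
    Real.log_le_log (by positivity) (by linarith)
  have hpowbd : (1 + Real.log ((n:ℝ)/2))^k ≤ 2^k * (Real.log n)^k := by
    rw [← mul_pow]
    apply pow_le_pow_left₀
    · have : (1:ℝ) ≤ (n:ℝ)/2 := hhalf1
      have := Real.log_nonneg this
      linarith
    · linarith
  have hEbd2 : E (k+1) ((n:ℝ)/2) ≤ 2^(k+1) * (2^k * (Real.log n)^k) / ((n:ℝ)/2) := by
    calc E (k+1) ((n:ℝ)/2) ≤ 2^(k+1) * (1 + Real.log ((n:ℝ)/2))^k / ((n:ℝ)/2) := hEbd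
      _ ≤ 2^(k+1) * (2^k * (Real.log n)^k) / ((n:ℝ)/2) := by
          gcongr
  have heqc : K0 * (2^(k+1) * (2^k * (Real.log n)^k) / ((n:ℝ)/2))
      = (K0 * 2^(k+1) * 2^k * 2) * ((n:ℝ)⁻¹ * (Real.log n)^k) := by
    field_simp
  have hfinal : iotaHat (k+1) n - iotaTilde (k+1) n
      ≤ (K0 * 2^(k+1) * 2^k * 2) * ((n:ℝ)⁻¹ * (Real.log n)^k) := by
    calc iotaHat (k+1) n - iotaTilde (k+1) n
        ≤ (n:ℝ)^(k+1+1) *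
          (∫ x in cube (k+1), (∏ j, x j)^(k+1+1) * Real.exp (-(n:ℝ) * ∏ j, x j)) := h1le
      _ ≤ K0 * E (k+1) ((n:ℝ)/2) := hstep
      _ ≤ K0 * (2^(k+1) * (2^k * (Real.log n)^k) / ((n:ℝ)/2)) :=
          mul_le_mul_of_nonneg_left hEbd2 hK0pos.le
      _ = (K0 * 2^(k+1) * 2^k * 2) * ((n:ℝ)⁻¹ * (Real.log n)^k) := heqc
  have hrhsnn : 0 ≤ (n:ℝ)⁻¹ * (Real.log n)^k := by
    apply mul_nonneg (by positivity)
    exact pow_nonneg (by linarith) k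
  rw [Real.norm_eq_abs, Real.norm_eq_abs, abs_of_nonneg h0le, abs_of_nonneg hrhsnn]
  exact hfinal

end Stmt12Aux

theorem stmt12 (d : ℕ) (hd : 1 ≤ d) :
    (∀ n : ℕ, 1 ≤ n →
        0 ≤ iotaHat d n - iotaTilde d n ∧
          iotaHat d n - iotaTilde d n ≤
            (n : ℝ) ^ (d + 1) *
              ∫ x in Set.univ.pi fun _ : Fin d => Set.Ico (0 : ℝ) 1,
                (∏ j, x j) ^ (d + 1) * Real.exp (-(n : ℝ) * ∏ j, x j)) ∧
      (fun n : ℕ => iotaHat d n - iotaTilde d n)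
        =O[atTop] fun n : ℕ => (n : ℝ)⁻¹ * (Real.log n) ^ (d - 1) := by
  obtain ⟨k, rfl⟩ : ∃ k, d = k + 1 := ⟨d - 1, (Nat.succ_pred_eq_of_pos hd).symm⟩
  constructor
  · intro n hn
    exact Stmt12Aux.main_ineq k n hn
  · simpa [Nat.add_sub_cancel] using Stmt12Aux.main_bigO k
end

section
/- With b_n := ln n - ln ln ln n - ln c_n where c_n > 0 and c_n = Θ(1), and β_n := n e^{-b_n} = c_n ln ln n, as n → ∞ the expected number E ρ_n(b_n) of remaining records with coordinate-sum at most b_n satisfies E ρ_n(b_n) = (1 + o(1)) (ln n)^{d-1-c_n}/(d-1)!. -/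
open MeasureTheory Filter


lemma aux_antideriv (a u v : ℝ) (ha : 0 < a) :
    ∫ y in u..v, Real.exp (-y) * Real.exp (-(a * Real.exp (-y))) =
      (Real.exp (-(a * Real.exp (-v))) - Real.exp (-(a * Real.exp (-u)))) / a := by
  have h : ∀ x ∈ Set.uIcc u v,
      HasDerivAt (fun y => Real.exp (-(a * Real.exp (-y))) / a)
        (Real.exp (-x) * Real.exp (-(a * Real.exp (-x)))) x := by
    intro x _
    have h1 : HasDerivAt (fun y : ℝ => -(a * Real.exp (-y))) (a * Real.exp (-x)) x := by
      have := ((hasDerivAt_neg x).exp.const_mul a).neg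
      exact this.congr_deriv (by ring)
    have h2 := (h1.exp).div_const a
    refine h2.congr_deriv ?_
    rw [div_eq_iff ha.ne']
    ring
  have hint : IntervalIntegrable (fun y => Real.exp (-y) * Real.exp (-(a * Real.exp (-y))))
      volume u v := by
    apply Continuous.intervalIntegrable
    continuity
  have := intervalIntegral.integral_eq_sub_of_hasDerivAt h hint
  rw [this]
  ring

lemma aux_one_sub_le (x : ℝ) : 1 - x ≤ Real.exp (-x) := by
  have := Real.add_one_le_exp (-x); linarith

lemma aux_le_one_sub (x : ℝ) (h0 : 0 ≤ x) (h2 : x ≤ 1/2) :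
    Real.exp (-(x + 2*x^2)) ≤ 1 - x := by
  have h1 : (1 : ℝ) + (x + 2*x^2) ≤ Real.exp (x + 2*x^2) := by
    have := Real.add_one_le_exp (x + 2*x^2); linarith
  have hpos : (0:ℝ) < 1 + (x + 2*x^2) := by nlinarith
  have h3 : Real.exp (-(x + 2*x^2)) = 1 / Real.exp (x + 2*x^2) := by
    rw [Real.exp_neg]; ring
  rw [h3]
  have h4 : 1 / Real.exp (x + 2*x^2) ≤ 1 / (1 + (x + 2*x^2)) := by
    apply one_div_le_one_div_of_le hpos h1
  refine h4.trans ?_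
  rw [div_le_iff₀ hpos]
  nlinarith

lemma aux_upper (k e : ℕ) (hk : 1 ≤ k) (b : ℝ) (hb : 0 ≤ b) :
    ∫ y in (0:ℝ)..b, y ^ e * Real.exp (-y) * (1 - Real.exp (-y)) ^ k ≤
      b ^ e * Real.exp (-((k:ℝ) * Real.exp (-b))) / k := by
  have hkpos : (0:ℝ) < k := by exact_mod_cast hk
  have step1 : ∫ y in (0:ℝ)..b, y ^ e * Real.exp (-y) * (1 - Real.exp (-y)) ^ k ≤
      ∫ y in (0:ℝ)..b, b ^ e * (Real.exp (-y) * Real.exp (-((k:ℝ) * Real.exp (-y)))) := by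
    apply intervalIntegral.integral_mono_on hb
    · apply Continuous.intervalIntegrable; continuity
    · apply Continuous.intervalIntegrable; continuity
    · intro y hy
      obtain ⟨hy0, hyb⟩ := hy
      have hx1 : Real.exp (-y) ≤ 1 := Real.exp_le_one_iff.mpr (by linarith)
      have h1 : (1 - Real.exp (-y)) ^ k ≤ Real.exp (-((k:ℝ) * Real.exp (-y))) := by
        calc (1 - Real.exp (-y)) ^ k ≤ (Real.exp (-(Real.exp (-y)))) ^ k := by
              apply pow_le_pow_left₀ (by linarith) (aux_one_sub_le _)
          _ = Real.exp (-((k:ℝ) * Real.exp (-y))) := by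
              rw [← Real.exp_nat_mul]; ring_nf
      calc y ^ e * Real.exp (-y) * (1 - Real.exp (-y)) ^ k
          ≤ b ^ e * Real.exp (-y) * Real.exp (-((k:ℝ) * Real.exp (-y))) := by
            apply mul_le_mul
            · exact mul_le_mul_of_nonneg_right (pow_le_pow_left₀ hy0 hyb e) (Real.exp_nonneg _)
            · exact h1
            · exact pow_nonneg (by linarith) k
            · exact mul_nonneg (pow_nonneg hb e) (Real.exp_nonneg _)
        _ = b ^ e * (Real.exp (-y) * Real.exp (-((k:ℝ) * Real.exp (-y)))) := by ring
  rw [intervalIntegral.integral_const_mul, aux_antideriv _ _ _ hkpos] at step1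
  refine step1.trans ?_
  calc b ^ e * ((Real.exp (-((k:ℝ) * Real.exp (-b))) - Real.exp (-((k:ℝ) * Real.exp (-(0:ℝ))))) / k)
      ≤ b ^ e * (Real.exp (-((k:ℝ) * Real.exp (-b))) / k) := by
        apply mul_le_mul_of_nonneg_left ?_ (pow_nonneg hb e)
        apply (div_le_div_iff_of_pos_right hkpos).mpr
        have : (0:ℝ) ≤ Real.exp (-((k:ℝ) * Real.exp (-(0:ℝ)))) := Real.exp_nonneg _
        linarith
    _ = b ^ e * Real.exp (-((k:ℝ) * Real.exp (-b))) / k := by ring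

lemma aux_lower (k e : ℕ) (hk : 1 ≤ k) (a b : ℝ) (h0 : 0 ≤ a) (hab : a ≤ b)
    (hh : Real.exp (-a) ≤ 1/2) :
    a ^ e * Real.exp (-(2*(k:ℝ)*Real.exp (-a)^2)) *
        ((Real.exp (-((k:ℝ) * Real.exp (-b))) - Real.exp (-((k:ℝ) * Real.exp (-a)))) / k)
      ≤ ∫ y in (0:ℝ)..b, y ^ e * Real.exp (-y) * (1 - Real.exp (-y)) ^ k := by
  have hkpos : (0:ℝ) < k := by exact_mod_cast hk
  have step2 : ∫ y in a..b, y ^ e * Real.exp (-y) * (1 - Real.exp (-y)) ^ k ≤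
      ∫ y in (0:ℝ)..b, y ^ e * Real.exp (-y) * (1 - Real.exp (-y)) ^ k := by
    apply intervalIntegral.integral_mono_interval h0 hab le_rfl
    · rw [Filter.EventuallyLE, ae_restrict_iff' measurableSet_Ioc]
      apply Filter.Eventually.of_forall
      intro y hy
      simp only [Pi.zero_apply]
      have hy0 : 0 < y := hy.1
      have : Real.exp (-y) ≤ 1 := Real.exp_le_one_iff.mpr (by linarith)
      have h1 : (0:ℝ) ≤ 1 - Real.exp (-y) := by linarith
      have h2 : (0:ℝ) ≤ y := le_of_lt hy0
      positivity
    · apply Continuous.intervalIntegrable; continuity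
  refine le_trans ?_ step2
  have step1 : ∫ y in a..b, (a ^ e * Real.exp (-(2*(k:ℝ)*Real.exp (-a)^2))) *
      (Real.exp (-y) * Real.exp (-((k:ℝ) * Real.exp (-y)))) ≤
      ∫ y in a..b, y ^ e * Real.exp (-y) * (1 - Real.exp (-y)) ^ k := by
    apply intervalIntegral.integral_mono_on hab
    · apply Continuous.intervalIntegrable; continuity
    · apply Continuous.intervalIntegrable; continuity
    · intro y hy
      obtain ⟨hya, hyb⟩ := hy
      have hy0 : (0:ℝ) ≤ y := le_trans h0 hya
      set x := Real.exp (-y) with hxdef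
      have hx0 : 0 ≤ x := Real.exp_nonneg _
      have hxa : x ≤ Real.exp (-a) := Real.exp_le_exp.mpr (by linarith)
      have hx2 : x ≤ 1/2 := hxa.trans hh
      have h1 : Real.exp (-((k:ℝ)*x)) * Real.exp (-(2*(k:ℝ)*Real.exp (-a)^2)) ≤ (1 - x) ^ k := by
        rw [← Real.exp_add]
        have hstep : Real.exp (-((k:ℝ)*x) + -(2*(k:ℝ)*Real.exp (-a)^2)) ≤
            Real.exp ((k:ℝ) * (-(x + 2*x^2))) := by
          apply Real.exp_le_exp.mpr
          have : x^2 ≤ Real.exp (-a)^2 := by nlinarith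
          nlinarith
        refine hstep.trans ?_
        rw [Real.exp_nat_mul]
        exact pow_le_pow_left₀ (Real.exp_nonneg _) (aux_le_one_sub x hx0 hx2) k
      calc (a ^ e * Real.exp (-(2*(k:ℝ)*Real.exp (-a)^2))) *
            (Real.exp (-y) * Real.exp (-((k:ℝ) * Real.exp (-y))))
          = (a ^ e * Real.exp (-y)) *
              (Real.exp (-((k:ℝ)*x)) * Real.exp (-(2*(k:ℝ)*Real.exp (-a)^2))) := by
            rw [← hxdef]; ring
        _ ≤ (y ^ e * Real.exp (-y)) * (1 - x) ^ k := by
            apply mul_le_mul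
            · exact mul_le_mul_of_nonneg_right (pow_le_pow_left₀ h0 hya e) (Real.exp_nonneg _)
            · exact h1
            · positivity
            · positivity
        _ = y ^ e * Real.exp (-y) * (1 - Real.exp (-y)) ^ k := by rw [← hxdef]
  refine le_trans ?_ step1
  rw [intervalIntegral.integral_const_mul, aux_antideriv _ _ _ hkpos]

lemma aux_exp_half : Real.exp (1/2 : ℝ) ≤ 2 := by
  have h : Real.exp (1/2 : ℝ) * Real.exp (1/2 : ℝ) = Real.exp 1 := by
    rw [← Real.exp_add]; norm_num
  nlinarith [Real.exp_pos (1/2 : ℝ), Real.exp_one_lt_d9]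

lemma aux_main_upper (e : ℕ) (nR kR bb Lv εb Ival : ℝ)
    (h1 : 1 ≤ kR) (hkn : kR = nR - 1) (hbb : 0 ≤ bb) (hLv : 1 ≤ Lv)
    (hI : Ival ≤ bb^e * Real.exp (-(kR*εb))/kR) :
    nR * Ival ≤ (bb/Lv)^e * (nR/kR) * Real.exp εb * (Lv^e * Real.exp (-(nR*εb))) := by
  have hk0 : 0 < kR := by linarith
  have hn0 : (0:ℝ) < nR := by nlinarith
  have hLv0 : (0:ℝ) < Lv := by linarith
  calc nR * Ival ≤ nR * (bb^e * Real.exp (-(kR*εb))/kR) :=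
        mul_le_mul_of_nonneg_left hI (by linarith)
    _ = (bb/Lv)^e * (nR/kR) * Real.exp εb * (Lv^e * Real.exp (-(nR*εb))) := by
        have hexp : Real.exp (-(kR*εb)) = Real.exp εb * Real.exp (-(nR*εb)) := by
          rw [← Real.exp_add]; congr 1; rw [hkn]; ring
        rw [hexp, div_pow]
        field_simp

lemma aux_main_lower (e : ℕ) (nR kR aa Lv εb εa Ival : ℝ)
    (h1 : 1 ≤ kR) (hkn : kR = nR - 1) (ha : 0 ≤ aa) (hLv : 1 ≤ Lv)
    (hεb : 0 ≤ εb) (hεa : εa = εb * Lv) (hεa2 : εa ≤ 1/2)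
    (hQ : 0 ≤ 1 - 2*Real.exp (-(nR * εb * (Lv - 1))))
    (hI : aa^e * Real.exp (-(2*kR*εa^2)) *
        ((Real.exp (-(kR*εb)) - Real.exp (-(kR*εa)))/kR) ≤ Ival) :
    (aa/Lv)^e * Real.exp (-(2*nR*(εb*Lv)^2)) * (1 - 2*Real.exp (-(nR * εb * (Lv - 1)))) *
        (Lv^e * Real.exp (-(nR*εb))) ≤ nR * Ival := by
  have hk0 : 0 < kR := by linarith
  have hn0 : (0:ℝ) < nR := by nlinarith
  have hLv0 : (0:ℝ) < Lv := by linarith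
  have hεa0 : 0 ≤ εa := by rw [hεa]; positivity
  set F := Real.exp (-(nR * εb * (Lv - 1))) with hF
  set E2 := Real.exp (-(nR*εb)) with hE2
  set P := Real.exp (-(2*nR*εa^2)) with hP
  set P' := Real.exp (-(2*kR*εa^2)) with hP'
  have eX : F * E2 = Real.exp (-(nR*εa)) := by
    rw [hF, hE2, ← Real.exp_add, hεa]; congr 1; ring
  have hsplit : (1 - 2*F) * E2 = E2 - 2 * Real.exp (-(nR*εa)) := by
    rw [← eX]; ring
  have e1 : Real.exp (-(kR*εa)) ≤ 2 * Real.exp (-(nR*εa)) := by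
    have h : Real.exp (-(kR*εa)) = Real.exp εa * Real.exp (-(nR*εa)) := by
      rw [← Real.exp_add]; congr 1; rw [hkn]; ring
    rw [h]
    have : Real.exp εa ≤ 2 := le_trans (Real.exp_le_exp.mpr hεa2) aux_exp_half
    exact mul_le_mul_of_nonneg_right this (Real.exp_nonneg _)
  have e2 : E2 ≤ Real.exp (-(kR*εb)) := by
    rw [hE2]; apply Real.exp_le_exp.mpr; nlinarith
  have e3 : P ≤ P' := by
    rw [hP, hP']; apply Real.exp_le_exp.mpr; nlinarith
  set Q := E2 - 2 * Real.exp (-(nR*εa)) with hQdef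
  set Q' := Real.exp (-(kR*εb)) - Real.exp (-(kR*εa)) with hQ'def
  have hQ0 : 0 ≤ Q := by
    rw [← hsplit]
    exact mul_nonneg hQ (Real.exp_nonneg _)
  have hQQ' : Q ≤ Q' := by rw [hQdef, hQ'def]; linarith
  have key : (aa/Lv)^e * Real.exp (-(2*nR*(εb*Lv)^2)) * (1 - 2*F) * (Lv^e * E2)
      = aa^e * P * Q := by
    have h1' : Real.exp (-(2*nR*(εb*Lv)^2)) = P := by rw [hP, hεa]
    calc (aa/Lv)^e * Real.exp (-(2*nR*(εb*Lv)^2)) * (1 - 2*F) * (Lv^e * E2)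
        = (aa/Lv)^e * Lv^e * (Real.exp (-(2*nR*(εb*Lv)^2)) * ((1 - 2*F) * E2)) := by ring
      _ = aa^e * (P * Q) := by
          rw [hsplit, h1', div_pow, div_mul_cancel₀ _ (pow_ne_zero e hLv0.ne')]
      _ = aa^e * P * Q := by ring
  rw [key]
  have hP0 : 0 ≤ P := Real.exp_nonneg _
  have hP'0 : 0 ≤ P' := Real.exp_nonneg _
  have hQ'0 : 0 ≤ Q' := le_trans hQ0 hQQ'
  have step : aa^e * P * Q ≤ aa^e * P' * Q' := by
    apply mul_le_mul ?_ hQQ' hQ0 (by positivity)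
    exact mul_le_mul_of_nonneg_left e3 (pow_nonneg ha e)
  refine step.trans ?_
  have hI0 : 0 ≤ Ival := by
    refine le_trans ?_ hI
    have : 0 ≤ Q'/kR := div_nonneg hQ'0 hk0.le
    positivity
  calc aa^e * P' * Q' = kR * (aa^e * P' * (Q'/kR)) := by field_simp
    _ ≤ kR * Ival := mul_le_mul_of_nonneg_left hI hk0.le
    _ ≤ nR * Ival := mul_le_mul_of_nonneg_right (by linarith) hI0

theorem stmt17 (d : ℕ) (hd : 2 ≤ d) (c : ℕ → ℝ) (hc : ∀ n, 0 < c n)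
    (hΘ : ∃ A B : ℝ, 0 < A ∧ ∀ n, A ≤ c n ∧ c n ≤ B)
    (b : ℕ → ℝ)
    (hb : ∀ n, b n = Real.log n - Real.log (Real.log (Real.log n)) - Real.log (c n)) :
    Tendsto
      (fun n : ℕ =>
        ((n : ℝ) / ((d - 1).factorial : ℝ) *
            ∫ y in (0 : ℝ)..b n,
              y ^ (d - 1) * Real.exp (-y) * (1 - Real.exp (-y)) ^ (n - 1)) /
          ((Real.log n) ^ ((d : ℝ) - 1 - c n) / ((d - 1).factorial : ℝ)))
      atTop (nhds 1) := by
  obtain ⟨A, B, hA, hAB⟩ := hΘ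
  set e := d - 1 with he
  -- basic limits
  have hn : Tendsto (fun n : ℕ => (n:ℝ)) atTop atTop := tendsto_natCast_atTop_atTop
  have hL : Tendsto (fun n : ℕ => Real.log n) atTop atTop :=
    Real.tendsto_log_atTop.comp hn
  have hLL : Tendsto (fun n : ℕ => Real.log (Real.log n)) atTop atTop :=
    Real.tendsto_log_atTop.comp hL
  have hdiv : Tendsto (fun x : ℝ => Real.log x / x) atTop (nhds 0) :=
    Real.isLittleO_log_id_atTop.tendsto_div_nhds_zero
  have hLL_L : Tendsto (fun n : ℕ => Real.log (Real.log n) / Real.log n) atTop (nhds 0) :=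
    hdiv.comp hL
  have hLLL_L : Tendsto
      (fun n : ℕ => Real.log (Real.log (Real.log n)) / Real.log n) atTop (nhds 0) := by
    apply tendsto_of_tendsto_of_tendsto_of_le_of_le' tendsto_const_nhds hLL_L
    · filter_upwards [hL.eventually_ge_atTop 1, hLL.eventually_ge_atTop 1] with n h1 h2
      exact div_nonneg (Real.log_nonneg h2) (by linarith)
    · filter_upwards [hL.eventually_ge_atTop 1, hLL.eventually_ge_atTop 1] with n h1 h2
      exact (div_le_div_iff_of_pos_right (show (0:ℝ) < Real.log n by linarith)).mpr
        (Real.log_le_self (by linarith))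
  have hMc : Tendsto (fun n : ℕ => Real.log (c n) / Real.log n) atTop (nhds 0) := by
    set M := max |Real.log A| |Real.log B| with hM
    have hup : Tendsto (fun n : ℕ => M / Real.log n) atTop (nhds 0) :=
      tendsto_const_nhds.div_atTop hL
    have hlo : Tendsto (fun n : ℕ => -M / Real.log n) atTop (nhds 0) :=
      tendsto_const_nhds.div_atTop hL
    apply tendsto_of_tendsto_of_tendsto_of_le_of_le' hlo hup
    · filter_upwards [hL.eventually_ge_atTop 1] with n h1
      apply (div_le_div_iff_of_pos_right (show (0:ℝ) < Real.log n by linarith)).mpr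
      calc -M ≤ -|Real.log A| := by simp [hM]
        _ ≤ Real.log A := neg_abs_le _
        _ ≤ Real.log (c n) := Real.log_le_log hA (hAB n).1
    · filter_upwards [hL.eventually_ge_atTop 1] with n h1
      apply (div_le_div_iff_of_pos_right (show (0:ℝ) < Real.log n by linarith)).mpr
      calc Real.log (c n) ≤ Real.log B := Real.log_le_log (hc n) (hAB n).2
        _ ≤ |Real.log B| := le_abs_self _
        _ ≤ M := le_max_right _ _
  have hbL : Tendsto (fun n : ℕ => b n / Real.log n) atTop (nhds 1) := by
    have hlim : Tendsto (fun n : ℕ =>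
        1 - Real.log (Real.log (Real.log n)) / Real.log n - Real.log (c n) / Real.log n)
        atTop (nhds 1) := by
      have := (tendsto_const_nhds (x := (1:ℝ)) (f := atTop)).sub hLLL_L |>.sub hMc
      simpa using this
    apply hlim.congr'
    filter_upwards [hL.eventually_ge_atTop 1] with n h1
    have hL0 : Real.log (n:ℝ) ≠ 0 := by linarith
    rw [hb n]
    field_simp
    try ring
  have haL : Tendsto (fun n : ℕ => (b n - Real.log (Real.log n)) / Real.log n)
      atTop (nhds 1) := by
    have hlim : Tendsto (fun n : ℕ =>
        1 - Real.log (Real.log (Real.log n)) / Real.log n - Real.log (c n) / Real.log n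
          - Real.log (Real.log n) / Real.log n) atTop (nhds 1) := by
      have := ((tendsto_const_nhds (x := (1:ℝ)) (f := atTop)).sub hLLL_L |>.sub hMc).sub hLL_L
      simpa using this
    apply hlim.congr'
    filter_upwards [hL.eventually_ge_atTop 1] with n h1
    have hL0 : Real.log (n:ℝ) ≠ 0 := by linarith
    rw [hb n]
    field_simp
    try ring
  -- b and b - log log n tend to infinity
  have hbtop : Tendsto b atTop atTop := by
    apply tendsto_atTop_mono' atTop ?_ (hL.atTop_div_const (by norm_num : (0:ℝ) < 2))
    filter_upwards [hbL.eventually (eventually_ge_nhds (by norm_num : (1:ℝ)/2 < 1)),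
      hL.eventually_gt_atTop 0] with n h1 h2
    have := (le_div_iff₀ h2).mp h1
    linarith
  have hatop : Tendsto (fun n : ℕ => b n - Real.log (Real.log n)) atTop atTop := by
    apply tendsto_atTop_mono' atTop ?_ (hL.atTop_div_const (by norm_num : (0:ℝ) < 2))
    filter_upwards [haL.eventually (eventually_ge_nhds (by norm_num : (1:ℝ)/2 < 1)),
      hL.eventually_gt_atTop 0] with n h1 h2
    have := (le_div_iff₀ h2).mp h1
    linarith
  have hE0 : Tendsto (fun n : ℕ => Real.exp (-(b n))) atTop (nhds 0) :=
    Real.tendsto_exp_atBot.comp (tendsto_neg_atTop_atBot.comp hbtop)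
  have hEa0 : Tendsto (fun n : ℕ => Real.exp (-(b n - Real.log (Real.log n)))) atTop (nhds 0) :=
    Real.tendsto_exp_atBot.comp (tendsto_neg_atTop_atBot.comp hatop)
  -- beta identity
  have hbeta : ∀ᶠ n : ℕ in atTop,
      (n:ℝ) * Real.exp (-(b n)) = c n * Real.log (Real.log n) := by
    filter_upwards [eventually_gt_atTop 0, hLL.eventually_gt_atTop 0] with n hn0 hLL0
    have hn0' : (0:ℝ) < n := by exact_mod_cast hn0
    rw [hb n, show -(Real.log (n:ℝ) - Real.log (Real.log (Real.log n)) - Real.log (c n)) =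
      Real.log (Real.log (Real.log (n:ℝ))) + Real.log (c n) + -Real.log (n:ℝ) by ring,
      Real.exp_add, Real.exp_add, Real.exp_log hLL0, Real.exp_log (hc n),
      Real.exp_neg, Real.exp_log hn0']
    field_simp
  have hexpLL : ∀ᶠ n : ℕ in atTop,
      Real.exp (Real.log (Real.log n)) = Real.log n := by
    filter_upwards [hL.eventually_gt_atTop 0] with n h
    exact Real.exp_log h
  -- denominator identity
  have hDeq : ∀ᶠ n : ℕ in atTop, (Real.log n) ^ ((d:ℝ) - 1 - c n) =
      Real.log (n:ℝ) ^ e * Real.exp (-((n:ℝ) * Real.exp (-(b n)))) := by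
    filter_upwards [hL.eventually_gt_atTop 0, hbeta] with n hL0 hβ
    have hcast : ((e:ℕ):ℝ) = (d:ℝ) - 1 := by
      rw [he, Nat.cast_sub (by omega : 1 ≤ d)]; norm_num
    rw [show (d:ℝ) - 1 - c n = ((e:ℕ):ℝ) + (-(c n)) by rw [hcast]; ring,
      Real.rpow_add hL0, Real.rpow_natCast, Real.rpow_def_of_pos hL0]
    congr 1
    rw [hβ]
    ring
  have hDposev : ∀ᶠ n : ℕ in atTop, 0 < (Real.log n) ^ ((d:ℝ) - 1 - c n) := by
    filter_upwards [hL.eventually_gt_atTop 0] with n h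
    exact Real.rpow_pos_of_pos h _
  -- upper comparison function tends to 1
  have hU1 : Tendsto (fun n : ℕ => (b n / Real.log n)^e * ((n:ℝ)/((n:ℝ)-1)) *
      Real.exp (Real.exp (-(b n)))) atTop (nhds 1) := by
    have T1 : Tendsto (fun n : ℕ => (b n / Real.log n)^e) atTop (nhds 1) := by
      simpa using hbL.pow e
    have hsub : Tendsto (fun n : ℕ => (n:ℝ) - 1) atTop atTop := by
      simpa [sub_eq_add_neg] using tendsto_atTop_add_const_right atTop (-1:ℝ) hn
    have T2 : Tendsto (fun n : ℕ => (n:ℝ)/((n:ℝ)-1)) atTop (nhds 1) := by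
      have T0 : Tendsto (fun n : ℕ => 1 + 1/((n:ℝ)-1)) atTop (nhds 1) := by
        have h0 : Tendsto (fun n : ℕ => (1:ℝ)/((n:ℝ)-1)) atTop (nhds 0) :=
          (tendsto_const_nhds (x := (1:ℝ)) (f := atTop)).div_atTop hsub
        simpa using (tendsto_const_nhds (x := (1:ℝ)) (f := atTop)).add h0
      apply T0.congr'
      filter_upwards [eventually_ge_atTop 2] with n hn2
      have h2 : (2:ℝ) ≤ (n:ℕ) := by exact_mod_cast hn2
      have : ((n:ℝ)-1) ≠ 0 := by linarith
      field_simp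
      ring
    have T3 : Tendsto (fun n : ℕ => Real.exp (Real.exp (-(b n)))) atTop (nhds 1) := by
      have := (Real.continuous_exp.tendsto 0).comp hE0
      simpa [Function.comp_def] using this
    simpa using (T1.mul T2).mul T3
  -- lower comparison function tends to 1
  have hw0 : Tendsto (fun n : ℕ =>
      2*(n:ℝ)*(Real.exp (-(b n)) * Real.log n)^2) atTop (nhds 0) := by
    set B' := max B 1 with hB'
    have hB'1 : (1:ℝ) ≤ B' := le_max_right _ _
    have hL4 : Tendsto (fun n : ℕ => Real.log (n:ℝ)^4/(n:ℝ)) atTop (nhds 0) := by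
      have := (Real.tendsto_pow_log_div_mul_add_atTop 1 0 4 one_ne_zero).comp hn
      simpa [Function.comp_def] using this
    have hup : Tendsto (fun n : ℕ => 2*B'^2 * (Real.log (n:ℝ)^4/(n:ℝ))) atTop (nhds 0) := by
      simpa using hL4.const_mul (2*B'^2)
    apply tendsto_of_tendsto_of_tendsto_of_le_of_le' tendsto_const_nhds hup
    · filter_upwards [] with n
      positivity
    · filter_upwards [hbeta, eventually_gt_atTop 0, hL.eventually_ge_atTop 1,
        hLL.eventually_ge_atTop 0] with n hβ hn0 hL1 hLL0
      have hn0' : (0:ℝ) < n := by exact_mod_cast hn0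
      have hε : Real.exp (-(b n)) = c n * Real.log (Real.log n) / n := by
        rw [eq_div_iff hn0'.ne']
        linarith [hβ]
      rw [hε]
      have hcB : c n ≤ B' := le_trans (hAB n).2 (le_max_left _ _)
      have hLLle : Real.log (Real.log (n:ℝ)) ≤ Real.log (n:ℝ) := Real.log_le_self (by linarith)
      have hc0 := (hc n).le
      rw [show c n * Real.log (Real.log (n:ℝ)) / (n:ℝ) * Real.log (n:ℝ) =
        c n * Real.log (Real.log (n:ℝ)) * Real.log (n:ℝ) / (n:ℝ) by ring, div_pow]
      have hnum : (c n * Real.log (Real.log (n:ℝ)) * Real.log (n:ℝ))^2 ≤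
          B'^2 * Real.log (n:ℝ)^4 := by
        have h2a : c n * Real.log (Real.log (n:ℝ)) ≤ B' * Real.log (n:ℝ) :=
          mul_le_mul hcB hLLle hLL0 (by linarith)
        have h2 : c n * Real.log (Real.log (n:ℝ)) * Real.log (n:ℝ) ≤
            B' * (Real.log (n:ℝ) * Real.log (n:ℝ)) := by
          nlinarith [mul_le_mul_of_nonneg_right h2a (show (0:ℝ) ≤ Real.log (n:ℝ) by linarith)]
        have h3 : 0 ≤ c n * Real.log (Real.log (n:ℝ)) * Real.log (n:ℝ) := by positivity
        nlinarith
      calc 2*(n:ℝ)*((c n * Real.log (Real.log (n:ℝ)) * Real.log (n:ℝ))^2/((n:ℝ))^2)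
          ≤ 2*(n:ℝ)*((B'^2 * Real.log (n:ℝ)^4)/((n:ℝ))^2) := by gcongr
        _ = 2*B'^2*(Real.log (n:ℝ)^4/(n:ℝ)) := by field_simp
  have hW1 : Tendsto (fun n : ℕ =>
      Real.exp (-(2*(n:ℝ)*(Real.exp (-(b n)) * Real.log n)^2))) atTop (nhds 1) := by
    have h' : Tendsto (fun n : ℕ =>
        -(2*(n:ℝ)*(Real.exp (-(b n)) * Real.log n)^2)) atTop (nhds 0) := by
      simpa using hw0.neg
    have := (Real.continuous_exp.tendsto 0).comp h'
    simpa [Function.comp_def] using this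
  have hX : Tendsto (fun n : ℕ =>
      (n:ℝ) * Real.exp (-(b n)) * (Real.log n - 1)) atTop atTop := by
    have hsubL : Tendsto (fun n : ℕ => Real.log (n:ℝ) - 1) atTop atTop := by
      simpa [sub_eq_add_neg] using tendsto_atTop_add_const_right atTop (-1:ℝ) hL
    have h1 : Tendsto (fun n : ℕ =>
        (A * Real.log (Real.log n)) * (Real.log (n:ℝ) - 1)) atTop atTop :=
      (hLL.const_mul_atTop hA).atTop_mul_atTop₀ hsubL
    apply tendsto_atTop_mono' atTop ?_ h1
    filter_upwards [hbeta, hLL.eventually_ge_atTop 0, hL.eventually_ge_atTop 1]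
      with n hβ h2 h3
    rw [hβ]
    have h4 : 0 ≤ (c n - A) * Real.log (Real.log (n:ℝ)) * (Real.log (n:ℝ) - 1) :=
      mul_nonneg (mul_nonneg (sub_nonneg.mpr (hAB n).1) h2) (by linarith)
    nlinarith [h4]
  have hF0 : Tendsto (fun n : ℕ =>
      Real.exp (-((n:ℝ) * Real.exp (-(b n)) * (Real.log n - 1)))) atTop (nhds 0) :=
    Real.tendsto_exp_atBot.comp (tendsto_neg_atTop_atBot.comp hX)
  have hT3' : Tendsto (fun n : ℕ =>
      1 - 2*Real.exp (-((n:ℝ) * Real.exp (-(b n)) * (Real.log n - 1)))) atTop (nhds 1) := by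
    simpa using (tendsto_const_nhds (x := (1:ℝ)) (f := atTop)).sub (hF0.const_mul 2)
  have hQpos : ∀ᶠ n : ℕ in atTop,
      0 ≤ 1 - 2*Real.exp (-((n:ℝ) * Real.exp (-(b n)) * (Real.log n - 1))) :=
    hT3'.eventually (eventually_ge_nhds (by norm_num : (0:ℝ) < 1))
  have hLo1 : Tendsto (fun n : ℕ =>
      ((b n - Real.log (Real.log n)) / Real.log n)^e *
        Real.exp (-(2*(n:ℝ)*(Real.exp (-(b n)) * Real.log n)^2)) *
        (1 - 2*Real.exp (-((n:ℝ) * Real.exp (-(b n)) * (Real.log n - 1)))))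
      atTop (nhds 1) := by
    have T1' : Tendsto (fun n : ℕ => ((b n - Real.log (Real.log n)) / Real.log n)^e)
        atTop (nhds 1) := by simpa using haL.pow e
    simpa using (T1'.mul hW1).mul hT3'
  have hεhalf : ∀ᶠ n : ℕ in atTop, Real.exp (-(b n - Real.log (Real.log n))) ≤ 1/2 :=
    hEa0.eventually (eventually_le_nhds (by norm_num : (0:ℝ) < 1/2))
  -- main eventual inequalities
  have hRU : ∀ᶠ n : ℕ in atTop,
      ((n:ℝ) * ∫ y in (0:ℝ)..b n,
          y ^ e * Real.exp (-y) * (1 - Real.exp (-y)) ^ (n - 1)) /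
        ((Real.log n) ^ ((d:ℝ) - 1 - c n)) ≤
      (b n / Real.log n)^e * ((n:ℝ)/((n:ℝ)-1)) * Real.exp (Real.exp (-(b n))) := by
    filter_upwards [hDeq, hL.eventually_ge_atTop 1, hbtop.eventually_ge_atTop 1,
      eventually_ge_atTop 2] with n hDn hL1 hb1 hn2
    have hDpos : (0:ℝ) < (Real.log n) ^ ((d:ℝ) - 1 - c n) :=
      Real.rpow_pos_of_pos (by linarith) _
    rw [div_le_iff₀ hDpos, hDn]
    have hkc : ((n-1:ℕ):ℝ) = (n:ℝ) - 1 := by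
      rw [Nat.cast_sub (by omega : 1 ≤ n)]; norm_num
    have hIu := aux_upper (n-1) e (by omega) (b n) (by linarith)
    rw [hkc] at hIu
    have h1k : (1:ℝ) ≤ (n:ℝ) - 1 := by
      have : (2:ℝ) ≤ (n:ℕ) := by exact_mod_cast hn2
      linarith
    exact aux_main_upper e (n:ℝ) ((n:ℝ)-1) (b n) (Real.log n) (Real.exp (-(b n))) _
      h1k rfl (by linarith) hL1 hIu
  have hRLo : ∀ᶠ n : ℕ in atTop,
      ((b n - Real.log (Real.log n)) / Real.log n)^e *
        Real.exp (-(2*(n:ℝ)*(Real.exp (-(b n)) * Real.log n)^2)) *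
        (1 - 2*Real.exp (-((n:ℝ) * Real.exp (-(b n)) * (Real.log n - 1)))) ≤
      ((n:ℝ) * ∫ y in (0:ℝ)..b n,
          y ^ e * Real.exp (-y) * (1 - Real.exp (-y)) ^ (n - 1)) /
        ((Real.log n) ^ ((d:ℝ) - 1 - c n)) := by
    filter_upwards [hDeq, hexpLL, hL.eventually_ge_atTop 1, hLL.eventually_ge_atTop 0,
      hatop.eventually_ge_atTop 1, hεhalf, hQpos, eventually_ge_atTop 2,
      hbtop.eventually_ge_atTop 1] with n hDn hexp hL1 hLL0 ha1 hhalf hQ hn2 hb1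
    have hDpos : (0:ℝ) < (Real.log n) ^ ((d:ℝ) - 1 - c n) :=
      Real.rpow_pos_of_pos (by linarith) _
    rw [le_div_iff₀ hDpos, hDn]
    have hkc : ((n-1:ℕ):ℝ) = (n:ℝ) - 1 := by
      rw [Nat.cast_sub (by omega : 1 ≤ n)]; norm_num
    have hεa : Real.exp (-(b n - Real.log (Real.log n))) =
        Real.exp (-(b n)) * Real.log n := by
      rw [show -(b n - Real.log (Real.log (n:ℝ))) = -(b n) + Real.log (Real.log (n:ℝ)) by ring,
        Real.exp_add, hexp]
    have hIl := aux_lower (n-1) e (by omega) (b n - Real.log (Real.log n)) (b n)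
      (by linarith) (by linarith) hhalf
    rw [hkc, hεa] at hIl
    have h1k : (1:ℝ) ≤ (n:ℝ) - 1 := by
      have : (2:ℝ) ≤ (n:ℕ) := by exact_mod_cast hn2
      linarith
    exact aux_main_lower e (n:ℝ) ((n:ℝ)-1) (b n - Real.log (Real.log n)) (Real.log n)
      (Real.exp (-(b n))) (Real.exp (-(b n)) * Real.log n) _
      h1k rfl (by linarith) hL1 (Real.exp_nonneg _) rfl (by rw [← hεa]; exact hhalf)
      hQ hIl
  -- squeeze
  have hmain : Tendsto (fun n : ℕ =>
      ((n:ℝ) * ∫ y in (0:ℝ)..b n,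
          y ^ e * Real.exp (-y) * (1 - Real.exp (-y)) ^ (n - 1)) /
        ((Real.log n) ^ ((d:ℝ) - 1 - c n))) atTop (nhds 1) :=
    tendsto_of_tendsto_of_tendsto_of_le_of_le' hLo1 hU1 hRLo hRU
  apply hmain.congr'
  filter_upwards [hDposev] with n hD
  have hf : ((d-1).factorial : ℝ) ≠ 0 := Nat.cast_ne_zero.mpr (Nat.factorial_ne_zero _)
  rw [he] at *
  field_simp
end
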